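/- Let f : ℝ^d → ℝ be twice continuously differentiable with L-Lipschitz gradient and H-Lipschitz Hessian (L, H > 0). Fix x ≠ y in ℝ^d, set r = ‖y − x‖, let f_x(y) = f(x) + ⟨∇f(x), y − x⟩ + ½ ⟨∇²f(x)(y − x), y − x⟩ be the second-order Taylor expansion of f at x evaluated at y, and for δ > 0 define the four-point estimate f̂ = f(x) + (L r²/δ)(f(x + (δ/(L r²))(y − x)) − f(x)) + (2 H² r⁶/δ²)(f(x + (δ/(2 H r³))(y − x)) + f(x − (δ/(2 H r³))(y − x)) − 2 f(x)). Then |f̂ − f_x(y)| ≤ δ. -/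

import Mathlib

open scoped BigOperators

/-- If `|φ' t| ≤ C * t ^ n` on `[0, a]`, then `|φ a - φ 0| ≤ C * a^(n+1)/(n+1)`. -/
lemma key_nonneg (φ φ' : ℝ → ℝ) (hφ : ∀ t, HasDerivAt φ (φ' t) t) (hc : Continuous φ')
    (C : ℝ) (n : ℕ) (hb : ∀ t, |φ' t| ≤ C * |t| ^ n) {a : ℝ} (ha : 0 ≤ a) :
    |φ a - φ 0| ≤ C * a ^ (n + 1) / (n + 1) := by
  have hC : 0 ≤ C := by
    have := hb 1
    simpa using this.trans' (abs_nonneg _)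
  have hint : ∫ t in (0:ℝ)..a, φ' t = φ a - φ 0 :=
    intervalIntegral.integral_eq_sub_of_hasDerivAt (fun t _ => hφ t)
      (hc.intervalIntegrable 0 a)
  rw [← hint, ← Real.norm_eq_abs]
  have hbound : ∀ᵐ t ∂(MeasureTheory.volume.restrict <| Set.uIoc (0:ℝ) a),
      ‖φ' t‖ ≤ C * t ^ n := by
    refine MeasureTheory.ae_restrict_of_forall_mem measurableSet_uIoc fun t ht => ?_
    rw [Set.uIoc_of_le ha] at ht
    have ht' : 0 < t := ht.1
    have := hb t
    rwa [abs_of_pos ht', Real.norm_eq_abs] at *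
  have hg : IntervalIntegrable (fun t => C * t ^ n) MeasureTheory.volume 0 a :=
    (by continuity : Continuous fun t : ℝ => C * t ^ n).intervalIntegrable 0 a
  have h1 := intervalIntegral.norm_integral_le_abs_of_norm_le hbound hg
  refine h1.trans ?_
  have : ∫ t in (0:ℝ)..a, C * t ^ n = C * (a ^ (n + 1) / (n + 1)) := by
    rw [intervalIntegral.integral_const_mul, integral_pow]
    ring
  rw [this]
  have hnn : 0 ≤ C * (a ^ (n + 1) / (n + 1)) := by positivity
  rw [abs_of_nonneg hnn]
  ring_nf
  exact le_rfl

lemma key_abs (φ φ' : ℝ → ℝ) (hφ : ∀ t, HasDerivAt φ (φ' t) t) (hc : Continuous φ')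
    (C : ℝ) (n : ℕ) (hb : ∀ t, |φ' t| ≤ C * |t| ^ n) (a : ℝ) :
    |φ a - φ 0| ≤ C * |a| ^ (n + 1) / (n + 1) := by
  rcases le_or_gt 0 a with ha | ha
  · rw [abs_of_nonneg ha]
    exact key_nonneg φ φ' hφ hc C n hb ha
  · have hφ' : ∀ t, HasDerivAt (fun s => φ (-s)) (-φ' (-t)) t := by
      intro t
      simpa [Function.comp_def] using (hφ (-t)).comp t (hasDerivAt_neg t)
    have hc' : Continuous fun t => -φ' (-t) := (hc.comp continuous_neg).neg
    have hb' : ∀ t, |(fun t => -φ' (-t)) t| ≤ C * |t| ^ n := by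
      intro t
      simpa [abs_neg] using hb (-t)
    have := key_nonneg (fun s => φ (-s)) (fun t => -φ' (-t)) hφ' hc' C n hb'
      (a := -a) (by linarith)
    simp only [neg_neg, neg_zero] at this
    rwa [abs_of_neg ha]

set_option maxHeartbeats 1600000 in
/-- The four-point zeroth-order estimate `f̂` approximates
the second-order Taylor expansion `f_x(y)` of an `L`-gradient-Lipschitz,
`H`-Hessian-Lipschitz function within error `δ`. -/
theorem stmt_14 (d : ℕ) (f : EuclideanSpace ℝ (Fin d) → ℝ) (hf : ContDiff ℝ 2 f)
    (L H : ℝ) (hL : 0 < L) (hH : 0 < H)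
    (hgrad : ∀ u v, ‖fderiv ℝ f u - fderiv ℝ f v‖ ≤ L * ‖u - v‖)
    (hhess : ∀ u v, ‖fderiv ℝ (fderiv ℝ f) u - fderiv ℝ (fderiv ℝ f) v‖ ≤ H * ‖u - v‖)
    (x y : EuclideanSpace ℝ (Fin d)) (hxy : x ≠ y)
    (δ : ℝ) (hδ : 0 < δ)
    (r : ℝ) (hr : r = ‖y - x‖)
    (fxy : ℝ)
    (hfxy : fxy = f x + fderiv ℝ f x (y - x)
      + (1 / 2) * fderiv ℝ (fderiv ℝ f) x (y - x) (y - x))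
    (fhat : ℝ)
    (hfhat : fhat = f x
      + (L * r ^ 2 / δ) * (f (x + (δ / (L * r ^ 2)) • (y - x)) - f x)
      + (2 * H ^ 2 * r ^ 6 / δ ^ 2) *
        (f (x + (δ / (2 * H * r ^ 3)) • (y - x))
          + f (x - (δ / (2 * H * r ^ 3)) • (y - x)) - 2 * f x)) :
    |fhat - fxy| ≤ δ := by
  set v : EuclideanSpace ℝ (Fin d) := y - x with hv_def
  have hvne : v ≠ 0 := sub_ne_zero.mpr (Ne.symm hxy)
  have hr0 : 0 < r := by rw [hr]; exact norm_pos_iff.mpr hvne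
  have hrv : ‖v‖ = r := hr.symm
  set g : ℝ → ℝ := fun t => f (x + t • v) with hg_def
  set g1 : ℝ → ℝ := fun t => fderiv ℝ f (x + t • v) v with hg1_def
  set g2 : ℝ → ℝ := fun t => fderiv ℝ (fderiv ℝ f) (x + t • v) v v with hg2_def
  have hline : ∀ t : ℝ, HasDerivAt (fun s : ℝ => x + s • v) v t := fun t => by
    simpa using ((hasDerivAt_id t).smul_const v).const_add x
  have hdf : Differentiable ℝ f := hf.differentiable (by norm_num)
  have hdf2 : Differentiable ℝ (fderiv ℝ f) :=
    (hf.fderiv_right (m := 1) (by norm_num)).differentiable (by norm_num)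
  have hg : ∀ t, HasDerivAt g (g1 t) t := fun t =>
    (hdf (x + t • v)).hasFDerivAt.comp_hasDerivAt t (hline t)
  have hg1 : ∀ t, HasDerivAt g1 (g2 t) t := fun t => by
    have h1 : HasDerivAt (fun s : ℝ => fderiv ℝ f (x + s • v))
        (fderiv ℝ (fderiv ℝ f) (x + t • v) v) t :=
      (hdf2 (x + t • v)).hasFDerivAt.comp_hasDerivAt t (hline t)
    simpa using h1.clm_apply (hasDerivAt_const t v)
  -- Lipschitz bounds
  have hlip1 : ∀ s t : ℝ, |g1 s - g1 t| ≤ L * r ^ 2 * |s - t| := by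
    intro s t
    have h1 : g1 s - g1 t = (fderiv ℝ f (x + s • v) - fderiv ℝ f (x + t • v)) v := by
      simp [hg1_def, ContinuousLinearMap.sub_apply]
    have h2 := (fderiv ℝ f (x + s • v) - fderiv ℝ f (x + t • v)).le_opNorm v
    have h3 := hgrad (x + s • v) (x + t • v)
    have h4 : (x + s • v) - (x + t • v) = (s - t) • v := by
      rw [sub_smul]; abel
    rw [h4, norm_smul, Real.norm_eq_abs, hrv] at h3
    rw [h1, ← Real.norm_eq_abs]
    calc ‖(fderiv ℝ f (x + s • v) - fderiv ℝ f (x + t • v)) v‖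
        ≤ ‖fderiv ℝ f (x + s • v) - fderiv ℝ f (x + t • v)‖ * ‖v‖ := h2
      _ ≤ (L * (|s - t| * r)) * r := by
          rw [hrv]; exact mul_le_mul_of_nonneg_right h3 hr0.le
      _ = L * r ^ 2 * |s - t| := by ring
  have hlip2 : ∀ s t : ℝ, |g2 s - g2 t| ≤ H * r ^ 3 * |s - t| := by
    intro s t
    set A := fderiv ℝ (fderiv ℝ f) (x + s • v) - fderiv ℝ (fderiv ℝ f) (x + t • v) with hA
    have h1 : g2 s - g2 t = A v v := by
      simp [hg2_def, hA, ContinuousLinearMap.sub_apply]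
    have h2 : ‖A v v‖ ≤ ‖A v‖ * ‖v‖ := (A v).le_opNorm v
    have h2' : ‖A v‖ ≤ ‖A‖ * ‖v‖ := A.le_opNorm v
    have h3 := hhess (x + s • v) (x + t • v)
    have h4 : (x + s • v) - (x + t • v) = (s - t) • v := by
      rw [sub_smul]; abel
    rw [h4, norm_smul, Real.norm_eq_abs, hrv] at h3
    rw [h1, ← Real.norm_eq_abs]
    calc ‖A v v‖ ≤ ‖A v‖ * ‖v‖ := h2
      _ ≤ (‖A‖ * ‖v‖) * ‖v‖ := mul_le_mul_of_nonneg_right h2' (norm_nonneg v)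
      _ ≤ ((H * (|s - t| * r)) * r) * r := by
          rw [hrv]
          have h5 : ‖A‖ * r ≤ (H * (|s - t| * r)) * r :=
            mul_le_mul_of_nonneg_right h3 hr0.le
          exact mul_le_mul_of_nonneg_right h5 hr0.le
      _ = H * r ^ 3 * |s - t| := by ring
  have hcg1 : Continuous g1 := by
    have hlw : LipschitzWith (Real.toNNReal (L * r ^ 2)) g1 :=
      LipschitzWith.of_dist_le_mul fun s t => by
        rw [Real.dist_eq, Real.dist_eq, Real.coe_toNNReal _ (by positivity)]
        exact hlip1 s t
    exact hlw.continuous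
  have hcg2 : Continuous g2 := by
    have hlw : LipschitzWith (Real.toNNReal (H * r ^ 3)) g2 :=
      LipschitzWith.of_dist_le_mul fun s t => by
        rw [Real.dist_eq, Real.dist_eq, Real.coe_toNNReal _ (by positivity)]
        exact hlip2 s t
    exact hlw.continuous
  set a : ℝ := δ / (L * r ^ 2) with ha_def
  set b : ℝ := δ / (2 * H * r ^ 3) with hb_def
  have ha0 : 0 < a := by rw [ha_def]; positivity
  have hb0 : 0 < b := by rw [hb_def]; positivity
  -- first-order estimate
  have hE1 : |g a - g1 0 * a - g 0| ≤ L * r ^ 2 * a ^ 2 / 2 := by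
    have h := key_nonneg (fun t => g t - g1 0 * t) (fun t => g1 t - g1 0)
      (fun t => by simpa [Pi.sub_def] using (hg t).sub ((hasDerivAt_id t).const_mul (g1 0)))
      (hcg1.sub continuous_const) (L * r ^ 2) 1
      (fun t => by simpa using hlip1 t 0) ha0.le
    norm_num at h
    exact h
  -- second-order derivative estimate
  have hPsi : ∀ s : ℝ, |g1 s - g1 0 - g2 0 * s| ≤ H * r ^ 3 * s ^ 2 / 2 := by
    intro s
    have h := key_abs (fun t => g1 t - g2 0 * t) (fun t => g2 t - g2 0) (fun t => by
        simpa [Pi.sub_def] using (hg1 t).sub ((hasDerivAt_id t).const_mul (g2 0)))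
      (hcg2.sub continuous_const) (H * r ^ 3) 1 (fun t => by simpa using hlip2 t 0) s
    norm_num [sub_sub_eq_add_sub, sub_right_comm] at h
    exact h
  -- second-order estimate
  have hEB : ∀ s : ℝ, |g s - g1 0 * s - g2 0 * s ^ 2 / 2 - g 0|
      ≤ H * r ^ 3 * |s| ^ 3 / 6 := by
    intro s
    have h := key_abs (fun t => g t - g1 0 * t - g2 0 * t ^ 2 / 2)
      (fun t => g1 t - g1 0 - g2 0 * t) ?_ ?_ (H * r ^ 3 / 2) 2 ?_ s
    · norm_num at h
      have he : H * r ^ 3 / 2 * |s| ^ 3 / 3 = H * r ^ 3 * |s| ^ 3 / 6 := by ring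
      linarith [h]
    · intro t
      have h1 : HasDerivAt (fun t : ℝ => g2 0 * t ^ 2 / 2) (g2 0 * t) t := by
        have := ((hasDerivAt_pow 2 t).const_mul (g2 0)).div_const 2
        refine this.congr_deriv ?_
        simp; ring
      have := ((hg t).sub ((hasDerivAt_id t).const_mul (g1 0))).sub h1
      simpa [Pi.sub_def] using this
    · exact (hcg1.sub continuous_const).sub (continuous_const.mul continuous_id)
    · intro t
      calc |g1 t - g1 0 - g2 0 * t| ≤ H * r ^ 3 * t ^ 2 / 2 := hPsi t
        _ = H * r ^ 3 / 2 * |t| ^ 2 := by rw [← sq_abs t]; ring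
  -- identities
  have hfx0 : g 0 = f x := by rw [hg_def]; simp
  have hg1x : g1 0 = fderiv ℝ f x v := by rw [hg1_def]; simp
  have hg2x : g2 0 = fderiv ℝ (fderiv ℝ f) x v v := by rw [hg2_def]; simp
  have hgnb : f (x - b • v) = g (-b) := by rw [hg_def]; simp [sub_eq_add_neg, neg_smul]
  have hid : fhat - fxy = (L * r ^ 2 / δ) * (g a - g1 0 * a - g 0)
      + (2 * H ^ 2 * r ^ 6 / δ ^ 2) *
        ((g b - g1 0 * b - g2 0 * b ^ 2 / 2 - g 0)
          + (g (-b) - g1 0 * (-b) - g2 0 * (-b) ^ 2 / 2 - g 0)) := by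
    rw [hfhat, hfxy, ← hg1x, ← hg2x, ← hfx0, hgnb]
    have hga : f (x + a • v) = g a := by rw [hg_def]
    have hgb : f (x + b • v) = g b := by rw [hg_def]
    rw [hga, hgb, ha_def, hb_def]
    have h1 : L * r ^ 2 ≠ 0 := by positivity
    have h2 : H ≠ 0 := hH.ne'
    have h3 : r ≠ 0 := hr0.ne'
    have h4 : δ ≠ 0 := hδ.ne'
    field_simp
    ring
  rw [hid]
  have hc1 : 0 < L * r ^ 2 / δ := by positivity
  have hc2 : 0 < 2 * H ^ 2 * r ^ 6 / δ ^ 2 := by positivity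
  have hEBb := hEB b
  have hEBnb := hEB (-b)
  rw [abs_neg, abs_of_pos hb0] at hEBnb
  rw [abs_of_pos hb0] at hEBb
  have habs : |(L * r ^ 2 / δ) * (g a - g1 0 * a - g 0)
      + (2 * H ^ 2 * r ^ 6 / δ ^ 2) *
        ((g b - g1 0 * b - g2 0 * b ^ 2 / 2 - g 0)
          + (g (-b) - g1 0 * (-b) - g2 0 * (-b) ^ 2 / 2 - g 0))|
      ≤ (L * r ^ 2 / δ) * (L * r ^ 2 * a ^ 2 / 2)
        + (2 * H ^ 2 * r ^ 6 / δ ^ 2) *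
          (H * r ^ 3 * b ^ 3 / 6 + H * r ^ 3 * b ^ 3 / 6) := by
    refine (abs_add_le _ _).trans ?_
    rw [abs_mul, abs_mul, abs_of_pos hc1, abs_of_pos hc2]
    gcongr
    refine (abs_add_le _ _).trans ?_
    gcongr
  refine habs.trans ?_
  have hfin : (L * r ^ 2 / δ) * (L * r ^ 2 * a ^ 2 / 2)
        + (2 * H ^ 2 * r ^ 6 / δ ^ 2) *
          (H * r ^ 3 * b ^ 3 / 6 + H * r ^ 3 * b ^ 3 / 6)
      = δ / 2 + δ / 12 := by
    rw [ha_def, hb_def]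
    have h1 : L * r ^ 2 ≠ 0 := by positivity
    have h2 : H ≠ 0 := hH.ne'
    have h3 : r ≠ 0 := hr0.ne'
    have h4 : δ ≠ 0 := hδ.ne'
    field_simp
    ring
  rw [hfin]
  linarith
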